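/- arXiv:2004.13472 — 2 statements merged into one kernel-verified Lean document; each statement's English description precedes it below -/
import Mathlib

section
/- Suppose F : E ⥤ B is a Grothendieck fibration such that B has pullbacks, both E and B have terminal objects, and F preserves the terminal object. Then F has a full and faithful right adjoint q : B ⥤ E, where q(X) is defined as the domain of the cartesian lifting of the unique map X ⟶ 1 at the terminal object of E. -/
open CategoryTheory Limits

universe v₁ v₂ u₁ u₂

variable {E : Type u₁} {B : Type u₂} [Category.{v₁} E] [Category.{v₂} B]

/-- A morphism `f : X ⟶ Y` of `E` is *cartesian* with respect to a functor `F : E ⥤ B`. -/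
def IsCart (F : E ⥤ B) {X Y : E} (f : X ⟶ Y) : Prop :=
  ∀ ⦃Z : E⦄ (g : Z ⟶ Y) (b : F.obj Z ⟶ F.obj X),
    F.map g = b ≫ F.map f → ∃! u : Z ⟶ X, F.map u = b ∧ u ≫ f = g

/-- `F` is a Grothendieck fibration: every arrow `a : X ⟶ F(A)` of the base has a cartesian
lifting at `A`. -/
def IsGrothendieckFib (F : E ⥤ B) : Prop :=
  ∀ ⦃A : E⦄ ⦃X : B⦄ (a : X ⟶ F.obj A),
    ∃ (L : E) (f : L ⟶ A) (hL : F.obj L = X),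
      F.map f = eqToHom hL ≫ a ∧ IsCart F f

noncomputable section PFAux

variable (F : E ⥤ B) [HasTerminal E] [HasTerminal B]
  (hfib : IsGrothendieckFib F) (hterm : IsTerminal (F.obj (⊤_ E)))

/-- Domain of the chosen cartesian lift of `X ⟶ F ⊤`. -/
def pfObj (X : B) : E := (hfib (A := ⊤_ E) (hterm.from X)).choose

/-- The chosen cartesian lift. -/
def pfTo (X : B) : pfObj F hfib hterm X ⟶ ⊤_ E :=
  (hfib (A := ⊤_ E) (hterm.from X)).choose_spec.choose

lemma pfEq (X : B) : F.obj (pfObj F hfib hterm X) = X :=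
  (hfib (A := ⊤_ E) (hterm.from X)).choose_spec.choose_spec.choose

lemma pfCart (X : B) : IsCart F (pfTo F hfib hterm X) :=
  (hfib (A := ⊤_ E) (hterm.from X)).choose_spec.choose_spec.choose_spec.2

/-- The lift of a morphism `b : F A ⟶ X` to `A ⟶ pfObj X`. -/
def pfLift {A : E} {X : B} (b : F.obj A ⟶ X) : A ⟶ pfObj F hfib hterm X :=
  (pfCart F hfib hterm X (terminal.from A) (b ≫ eqToHom (pfEq F hfib hterm X).symm)
    (hterm.hom_ext _ _)).choose

lemma pfLift_spec {A : E} {X : B} (b : F.obj A ⟶ X) :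
    F.map (pfLift F hfib hterm b) = b ≫ eqToHom (pfEq F hfib hterm X).symm :=
  (pfCart F hfib hterm X (terminal.from A) (b ≫ eqToHom (pfEq F hfib hterm X).symm)
    (hterm.hom_ext _ _)).choose_spec.1.1

lemma pfLift_unique {A : E} {X : B} (b : F.obj A ⟶ X) (u : A ⟶ pfObj F hfib hterm X)
    (hu : F.map u = b ≫ eqToHom (pfEq F hfib hterm X).symm) :
    u = pfLift F hfib hterm b :=
  (pfCart F hfib hterm X (terminal.from A) (b ≫ eqToHom (pfEq F hfib hterm X).symm)
    (hterm.hom_ext _ _)).choose_spec.2 u ⟨hu, terminal.hom_ext _ _⟩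

/-- Maps into `pfObj X` are determined by their image under `F`. -/
lemma pf_hom_ext {A : E} {X : B} (u v : A ⟶ pfObj F hfib hterm X)
    (h : F.map u = F.map v) : u = v := by
  exact (pfLift_unique F hfib hterm (F.map v ≫ eqToHom (pfEq F hfib hterm X)) u
    (by simp [h])).trans (pfLift_unique F hfib hterm _ v (by simp)).symm

/-- The right adjoint functor. -/
def pfFunctor : B ⥤ E where
  obj X := pfObj F hfib hterm X
  map {X Y} b := pfLift F hfib hterm (eqToHom (pfEq F hfib hterm X) ≫ b)
  map_id X := by
    refine (pfLift_unique F hfib hterm _ _ ?_).symm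
    simp
  map_comp {X Y Z} b c := by
    refine (pfLift_unique F hfib hterm _ _ ?_).symm
    simp [pfLift_spec]

lemma pfFunctor_map_spec {X Y : B} (b : X ⟶ Y) :
    F.map ((pfFunctor F hfib hterm).map b) =
      eqToHom (pfEq F hfib hterm X) ≫ b ≫ eqToHom (pfEq F hfib hterm Y).symm := by
  simpa [pfFunctor] using pfLift_spec F hfib hterm (eqToHom (pfEq F hfib hterm X) ≫ b)

/-- The adjunction `F ⊣ pfFunctor`. -/
def pfAdj : F ⊣ pfFunctor F hfib hterm :=
  Adjunction.mkOfHomEquiv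
    { homEquiv := fun A X =>
        { toFun := fun a => pfLift F hfib hterm a
          invFun := fun u => F.map u ≫ eqToHom (pfEq F hfib hterm X)
          left_inv := fun a => by simp [pfFunctor, pfLift_spec]
          right_inv := fun u => (pfLift_unique F hfib hterm _ u (by simp [pfFunctor])).symm }
      homEquiv_naturality_left_symm := fun f g => by
        show F.map (f ≫ g) ≫ eqToHom _ = F.map f ≫ F.map g ≫ eqToHom _
        simp
      homEquiv_naturality_right := fun {A X Y} f g => by
        refine pf_hom_ext F hfib hterm _ _ ?_
        show F.map (pfLift F hfib hterm (f ≫ g)) =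
          F.map (pfLift F hfib hterm f ≫ pfLift F hfib hterm (eqToHom (pfEq F hfib hterm X) ≫ g))
        simp [pfLift_spec] }

end PFAux

/-- Fact 2.4 (⟹ direction): a Grothendieck fibration `F : E ⥤ B` such that `B` has pullbacks,
`E` and `B` have terminal objects, and `F` preserves the terminal object, has a full and
faithful right adjoint `q`, where each `q(X)` is the domain of a cartesian lifting of the
unique map `X ⟶ 1` at the terminal object of `E` (so `F (q X) = X` and the unique map
`q X ⟶ ⊤_E` is cartesian). -/
theorem pullbackFib_has_ff_right_adjoint
    (F : E ⥤ B) [HasTerminal E] [HasTerminal B] [HasPullbacks B]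
    (hfib : IsGrothendieckFib F)
    (hterm : IsTerminal (F.obj (⊤_ E))) :
    ∃ (q : B ⥤ E) (_adj : F ⊣ q), q.Full ∧ q.Faithful ∧
      ∀ X : B, ∃ (_ : F.obj (q.obj X) = X) (t : q.obj X ⟶ ⊤_ E), IsCart F t := by
  refine ⟨pfFunctor F hfib hterm, pfAdj F hfib hterm, ?_, ?_, fun X =>
    ⟨pfEq F hfib hterm X, pfTo F hfib hterm X, pfCart F hfib hterm X⟩⟩
  · refine ⟨fun {X Y} u => ⟨eqToHom (pfEq F hfib hterm X).symm ≫ F.map u ≫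
      eqToHom (pfEq F hfib hterm Y), ?_⟩⟩
    refine pf_hom_ext F hfib hterm _ _ ?_
    simp [pfFunctor, pfLift_spec]
  · refine ⟨fun {X Y} {b b'} h => ?_⟩
    have := congrArg F.map h
    rw [pfFunctor_map_spec, pfFunctor_map_spec] at this
    have h2 := congrArg (fun t => eqToHom (pfEq F hfib hterm X).symm ≫ t ≫
      eqToHom (pfEq F hfib hterm Y)) this
    simpa using h2
end

section
/- Let ⋔ : E ⥤ B be a state-parameter fibration with parameterized-unit functor p. For any two morphisms X ⟶ Y and Z ⟶ Y in B, we have p(X ×_Y Z) ≅ p(X) ⊗_{qY} p(Z), where ⊗_{qY} is the fibered monoidal product over qY. -/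
open CategoryTheory Limits MonoidalCategory MonoidalClosed

universe v₁ v₂ u₁ u₂

variable {E : Type u₁} {B : Type u₂} [Category.{v₁} E] [Category.{v₂} B]

/-- A *state-parameter fibration* (Definition 2.10): a pullback fibration `⋔ = sharp` from a
symmetric monoidal closed category `E` of states to a locally cartesian closed category `B`
of parameters, such that `⋔` preserves the monoidal closed structure, the tensor product of
cartesian arrows is cartesian, each slice `E/qX` is monoidal closed via the fibered tensor
`⊗_{qX}` and fibered hom `⊸_{qX}` (given by cartesian liftings), together with the
parameterized-terminal functor `q` (full and faithful right adjoint of `⋔` with identity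
counit), the parameterized-unit functor `p` (cartesian liftings of the unique maps to the
terminal object, with `p 1 = I`), and a right adjoint `♭` of `p`. -/
structure StateParamFib (E : Type u₁) (B : Type u₂) [Category.{v₁} E] [Category.{v₂} B]
    [MonoidalCategory E] [SymmetricCategory E] [MonoidalClosed E] [HasTerminal E]
    [CartesianMonoidalCategory B] [MonoidalClosed B] [HasPullbacks B] where
  /-- the fibration `⋔ : E ⥤ B` -/
  sharp : E ⥤ B
  /-- `⋔` is a Grothendieck fibration -/
  isFib : ∀ ⦃A : E⦄ ⦃X : B⦄ (a : X ⟶ sharp.obj A),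
    ∃ (L : E) (f : L ⟶ A) (hL : sharp.obj L = X),
      sharp.map f = eqToHom hL ≫ a ∧ IsCart sharp f
  /-- `⋔` preserves the terminal object -/
  presTerminal : IsTerminal (sharp.obj (⊤_ E))
  /-- `B` is locally cartesian closed -/
  overCFP : ∀ X : B, CartesianMonoidalCategory (Over X)
  overCC : ∀ X : B, @MonoidalClosed (Over X) _ (overCFP X).toMonoidalCategory
  /-- `⋔` is a monoidal closed functor -/
  sharpUnitIso : sharp.obj (𝟙_ E) ≅ 𝟙_ B
  sharpTensorIso : ∀ A C : E, sharp.obj (A ⊗ C) ≅ sharp.obj A ⊗ sharp.obj C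
  sharpHomIso : ∀ A C : E,
    sharp.obj ((ihom A).obj C) ≅ (ihom (sharp.obj A)).obj (sharp.obj C)
  /-- the tensor product of cartesian arrows is cartesian -/
  tensorCart : ∀ {A A' C C' : E} (f : A ⟶ A') (g : C ⟶ C'),
    IsCart sharp f → IsCart sharp g → IsCart sharp (f ⊗ₘ g)
  /-- the parameterized-terminal functor `q`, a full and faithful right adjoint of `⋔`
  whose counit is strictly the identity -/
  q : B ⥤ E
  adj : sharp ⊣ q
  qFull : q.Full
  qFaithful : q.Faithful
  sharpQObj : ∀ X : B, sharp.obj (q.obj X) = X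
  counitId : ∀ X : B, adj.counit.app X = eqToHom (sharpQObj X)
  /-- the parameterized-unit functor `p`, with `p 1 = I`, given by cartesian liftings -/
  p : B ⥤ E
  pTop : p.obj (𝟙_ B) = 𝟙_ E
  sharpPObj : ∀ X : B, sharp.obj (p.obj X) = X
  sharpPMap : ∀ {X Y : B} (f : X ⟶ Y),
    sharp.map (p.map f) = eqToHom (sharpPObj X) ≫ f ≫ eqToHom (sharpPObj Y).symm
  pCart : ∀ {X Y : B} (f : X ⟶ Y), IsCart sharp (p.map f)
  /-- the right adjoint `♭` of `p` -/
  flat : E ⥤ B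
  padj : p ⊣ flat
  /-- the fibered monoidal product `A ⊗_{qX} C` of objects `a : A ⟶ q X`, `c : C ⟶ q X`
  of `E / q X`: the cartesian lifting of the inclusion `⋔A ×_X ⋔C ↪ ⋔A × ⋔C` at `A ⊗ C` -/
  ft : ∀ {X : B} (A C : E), (A ⟶ q.obj X) → (C ⟶ q.obj X) → E
  ftHom : ∀ {X : B} {A C : E} (a : A ⟶ q.obj X) (c : C ⟶ q.obj X), ft A C a c ⟶ A ⊗ C
  ftCart : ∀ {X : B} {A C : E} (a : A ⟶ q.obj X) (c : C ⟶ q.obj X), IsCart sharp (ftHom a c)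
  ftBase : ∀ {X : B} {A C : E} (a : A ⟶ q.obj X) (c : C ⟶ q.obj X),
    sharp.obj (ft A C a c) =
      pullback (sharp.map a ≫ eqToHom (sharpQObj X)) (sharp.map c ≫ eqToHom (sharpQObj X))
  ftMapEq : ∀ {X : B} {A C : E} (a : A ⟶ q.obj X) (c : C ⟶ q.obj X),
    sharp.map (ftHom a c) = eqToHom (ftBase a c) ≫
      CartesianMonoidalCategory.lift (pullback.fst _ _) (pullback.snd _ _) ≫ (sharpTensorIso A C).inv
  /-- the structure map `A ⊗_{qX} C ⟶ q X` -/
  ftP : ∀ {X : B} {A C : E} (a : A ⟶ q.obj X) (c : C ⟶ q.obj X), ft A C a c ⟶ q.obj X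
  ftP_eq : ∀ {X : B} {A C : E} (a : A ⟶ q.obj X) (c : C ⟶ q.obj X),
    ftP a c = adj.homEquiv _ _
      (eqToHom (ftBase a c) ≫ pullback.fst _ _ ≫ sharp.map a ≫ eqToHom (sharpQObj X))
  /-- the projection of `A ⊗_{qX} C` to the parameterized terminal `q (⋔ C)` of the second
  factor (used for dependent monoidal products) -/
  ftPR : ∀ {X : B} {A C : E} (a : A ⟶ q.obj X) (c : C ⟶ q.obj X),
    ft A C a c ⟶ q.obj (sharp.obj C)
  ftPR_eq : ∀ {X : B} {A C : E} (a : A ⟶ q.obj X) (c : C ⟶ q.obj X),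
    ftPR a c = adj.homEquiv _ _ (eqToHom (ftBase a c) ≫ pullback.snd _ _)
  /-- functoriality of the fibered tensor in the first variable, over `q X` -/
  ftMapL : ∀ {X : B} {A A' C : E} {a : A ⟶ q.obj X} {a' : A' ⟶ q.obj X}
    (c : C ⟶ q.obj X) (g : A ⟶ A'), g ≫ a' = a → (ft A C a c ⟶ ft A' C a' c)
  ftMapL_comm : ∀ {X : B} {A A' C : E} {a : A ⟶ q.obj X} {a' : A' ⟶ q.obj X}
    (c : C ⟶ q.obj X) (g : A ⟶ A') (hg : g ≫ a' = a),
    ftMapL c g hg ≫ ftHom a' c = ftHom a c ≫ (g ⊗ₘ 𝟙 C)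
  /-- the fibered function space `A ⊸_{qX} C` -/
  fh : ∀ {X : B} (A C : E), (A ⟶ q.obj X) → (C ⟶ q.obj X) → E
  fhProj : ∀ {X : B} {A C : E} (a : A ⟶ q.obj X) (c : C ⟶ q.obj X), fh A C a c ⟶ q.obj X
  /-- evaluation (counit of `- ⊗_{qX} A ⊣ A ⊸_{qX} -`) -/
  fhEv : ∀ {X : B} {A C : E} (a : A ⟶ q.obj X) (c : C ⟶ q.obj X),
    ft (fh A C a c) A (fhProj a c) a ⟶ C
  fhEv_over : ∀ {X : B} {A C : E} (a : A ⟶ q.obj X) (c : C ⟶ q.obj X),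
    fhEv a c ≫ c = ftP (fhProj a c) a
  /-- each slice `E / q X` is monoidal closed: `- ⊗_{qX} A ⊣ A ⊸_{qX} -` -/
  fhUP : ∀ {X : B} {A C D : E} (a : A ⟶ q.obj X) (c : C ⟶ q.obj X) (d : D ⟶ q.obj X)
    (f : ft D A d a ⟶ C), f ≫ c = ftP d a →
    ∃! g : {g : D ⟶ fh A C a c // g ≫ fhProj a c = d},
      ftMapL a g.1 g.2 ≫ fhEv a c = f

/-- Isomorphisms are cartesian with respect to any functor. -/
lemma isCart_of_isIso (F : E ⥤ B) {A C : E} (f : A ⟶ C) [IsIso f] : IsCart F f := by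
  intro Z gz b hb
  refine ⟨gz ≫ inv f, ⟨?_, by simp⟩, ?_⟩
  · rw [F.map_comp, hb, Category.assoc, ← F.map_comp, IsIso.hom_inv_id, F.map_id,
      Category.comp_id]
  · rintro u ⟨-, hu2⟩
    rw [← hu2]; simp

/-- Cartesian morphisms are closed under composition. -/
lemma isCart_comp (F : E ⥤ B) {A C D : E} {f : A ⟶ C} {g : C ⟶ D}
    (hf : IsCart F f) (hg : IsCart F g) : IsCart F (f ≫ g) := by
  intro Z h b hb
  obtain ⟨v, ⟨hv1, hv2⟩, hv3⟩ := hg h (b ≫ F.map f)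
    (by rw [hb, F.map_comp, Category.assoc])
  obtain ⟨u, ⟨hu1, hu2⟩, hu3⟩ := hf v b (by rw [hv1])
  refine ⟨u, ⟨hu1, by rw [← Category.assoc, hu2, hv2]⟩, ?_⟩
  rintro w ⟨hw1, hw2⟩
  have hwf : w ≫ f = v := hv3 _ ⟨by rw [F.map_comp, hw1], by rw [Category.assoc, hw2]⟩
  exact hu3 _ ⟨hw1, hwf⟩

/-- Theorem B.1: the parameterized-unit functor `p` maps fibered products to fibered
monoidal products: for `f : X ⟶ Y` and `g : Z ⟶ Y` in `B`,
`p (X ×_Y Z) ≅ p X ⊗_{qY} p Z`, where `p X` and `p Z` lie over `q Y` via the transposes of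
`f` and `g`. -/
theorem p_fibered_product
    [MonoidalCategory E] [SymmetricCategory E] [MonoidalClosed E] [HasTerminal E]
    [CartesianMonoidalCategory B] [MonoidalClosed B] [HasPullbacks B]
    (S : StateParamFib E B) {X Y Z : B} (f : X ⟶ Y) (g : Z ⟶ Y) :
    Nonempty (S.p.obj (pullback f g) ≅
      S.ft (S.p.obj X) (S.p.obj Z)
        (S.adj.homEquiv _ _ (eqToHom (S.sharpPObj X) ≫ f))
        (S.adj.homEquiv _ _ (eqToHom (S.sharpPObj Z) ≫ g))) := by
  classical
  set a : S.p.obj X ⟶ S.q.obj Y := S.adj.homEquiv _ _ (eqToHom (S.sharpPObj X) ≫ f) with ha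
  set c : S.p.obj Z ⟶ S.q.obj Y := S.adj.homEquiv _ _ (eqToHom (S.sharpPObj Z) ≫ g) with hc
  -- the base of the fibered tensor is the pullback of the (eqToHom-twisted) maps
  have h1 : S.sharp.map a ≫ eqToHom (S.sharpQObj Y) = eqToHom (S.sharpPObj X) ≫ f := by
    have := S.adj.homEquiv_counit (X := S.p.obj X) (Y := Y)
      (g := S.adj.homEquiv _ _ (eqToHom (S.sharpPObj X) ≫ f))
    rw [Equiv.symm_apply_apply, S.counitId] at this
    rw [ha, ← this]
  have h2 : S.sharp.map c ≫ eqToHom (S.sharpQObj Y) = eqToHom (S.sharpPObj Z) ≫ g := by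
    have := S.adj.homEquiv_counit (X := S.p.obj Z) (Y := Y)
      (g := S.adj.homEquiv _ _ (eqToHom (S.sharpPObj Z) ≫ g))
    rw [Equiv.symm_apply_apply, S.counitId] at this
    rw [hc, ← this]
  -- iso between the twisted pullback and `pullback f g`
  let shiftIso : pullback (eqToHom (S.sharpPObj X) ≫ f) (eqToHom (S.sharpPObj Z) ≫ g) ≅
      pullback f g := by
    refine ⟨pullback.lift (pullback.fst _ _ ≫ eqToHom (S.sharpPObj X))
        (pullback.snd _ _ ≫ eqToHom (S.sharpPObj Z)) (by
          simpa [Category.assoc] using pullback.condition),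
      pullback.lift (pullback.fst f g ≫ eqToHom (S.sharpPObj X).symm)
        (pullback.snd f g ≫ eqToHom (S.sharpPObj Z).symm) (by
          simp [Category.assoc, pullback.condition]), ?_, ?_⟩
    · apply pullback.hom_ext <;> simp only [pullback.lift_fst, pullback.lift_snd, pullback.lift_fst_assoc,
        pullback.lift_snd_assoc, eqToHom_trans, eqToHom_refl, Category.comp_id, Category.id_comp, Category.assoc]
    · apply pullback.hom_ext <;> simp only [pullback.lift_fst, pullback.lift_snd, pullback.lift_fst_assoc,
        pullback.lift_snd_assoc, eqToHom_trans, eqToHom_refl, Category.comp_id, Category.id_comp, Category.assoc]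
  let e : S.sharp.obj (S.ft (S.p.obj X) (S.p.obj Z) a c) ≅ pullback f g :=
    eqToIso (S.ftBase a c) ≪≫ pullback.congrHom h1 h2 ≪≫ shiftIso
  -- the base object of `𝟙_ E` is terminal
  have ht : S.sharp.obj (𝟙_ E) = 𝟙_ B := by rw [← S.pTop]; exact S.sharpPObj _
  have hterm : ∀ {U : B} (h₁ h₂ : U ⟶ S.sharp.obj (𝟙_ E)), h₁ = h₂ := by
    intro U h₁ h₂
    have : h₁ ≫ eqToHom ht = h₂ ≫ eqToHom ht :=
      CartesianMonoidalCategory.toUnit_unique _ _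
    simpa using congrArg (fun t => t ≫ eqToHom ht.symm) this
  -- two cartesian arrows into `𝟙_ E`
  set cW : S.p.obj (pullback f g) ⟶ 𝟙_ E :=
    S.p.map (CartesianMonoidalCategory.toUnit _) ≫ eqToHom S.pTop with hcWdef
  have hcW : IsCart S.sharp cW :=
    isCart_comp _ (S.pCart _) (isCart_of_isIso _ _)
  set cF : S.ft (S.p.obj X) (S.p.obj Z) a c ⟶ 𝟙_ E :=
    S.ftHom a c ≫
      ((S.p.map (CartesianMonoidalCategory.toUnit X) ≫ eqToHom S.pTop) ⊗ₘ
        (S.p.map (CartesianMonoidalCategory.toUnit Z) ≫ eqToHom S.pTop)) ≫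
      (λ_ (𝟙_ E)).hom with hcFdef
  have hcF : IsCart S.sharp cF := by
    refine isCart_comp _ (S.ftCart a c) (isCart_comp _ ?_ (isCart_of_isIso _ _))
    exact S.tensorCart _ _
      (isCart_comp _ (S.pCart _) (isCart_of_isIso _ _))
      (isCart_comp _ (S.pCart _) (isCart_of_isIso _ _))
  -- base isos
  set b₁ : S.sharp.obj (S.p.obj (pullback f g)) ⟶
      S.sharp.obj (S.ft (S.p.obj X) (S.p.obj Z) a c) :=
    eqToHom (S.sharpPObj (pullback f g)) ≫ e.inv with hb₁
  set b₂ : S.sharp.obj (S.ft (S.p.obj X) (S.p.obj Z) a c) ⟶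
      S.sharp.obj (S.p.obj (pullback f g)) :=
    e.hom ≫ eqToHom (S.sharpPObj (pullback f g)).symm with hb₂
  have hb₁b₂ : b₁ ≫ b₂ = 𝟙 _ := by simp [hb₁, hb₂]
  have hb₂b₁ : b₂ ≫ b₁ = 𝟙 _ := by simp [hb₁, hb₂]
  -- the two lifts
  obtain ⟨u, ⟨hu1, hu2⟩, -⟩ := hcF cW b₁ (hterm _ _)
  obtain ⟨v, ⟨hv1, hv2⟩, -⟩ := hcW cF b₂ (hterm _ _)
  refine ⟨⟨u, v, ?_, ?_⟩⟩
  · -- u ≫ v = 𝟙 by uniqueness of lifts through cW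
    obtain ⟨w, -, hw3⟩ := hcW cW (𝟙 _) (by simp)
    have e1 : u ≫ v = w := hw3 _ ⟨by rw [S.sharp.map_comp, hu1, hv1, hb₁b₂],
      by rw [Category.assoc, hv2, hu2]⟩
    have e2 : 𝟙 _ = w := hw3 _ ⟨by simp, by simp⟩
    rw [e1, e2]
  · -- v ≫ u = 𝟙 by uniqueness of lifts through cF
    obtain ⟨w, -, hw3⟩ := hcF cF (𝟙 _) (by simp)
    have e1 : v ≫ u = w := hw3 _ ⟨by rw [S.sharp.map_comp, hu1, hv1, hb₂b₁],
      by rw [Category.assoc, hu2, hv2]⟩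
    have e2 : 𝟙 _ = w := hw3 _ ⟨by simp, by simp⟩
    rw [e1, e2]
end
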